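/- For μ > 0, ν real, and β > 0: ∫_0^∞ x^{ν-1} exp(-β/x − μx) dx = 2 (β/μ)^{ν/2} K_ν(2√(βμ)), where K_ν is the modified Bessel function of the second kind. -/

import Mathlib

open MeasureTheory Real Set

/-- The modified Bessel function of the second kind,
`K_ν(z) = ∫_0^∞ exp (-z cosh t) cosh (ν t) dt`. -/
noncomputable def besselK (ν z : ℝ) : ℝ :=
  ∫ t in Set.Ioi (0 : ℝ), Real.exp (-z * Real.cosh t) * Real.cosh (ν * t)

/-- Quadratic lower bound for `cosh`. -/
lemma cosh_ge_sq_div_eight (t : ℝ) : t ^ 2 / 8 ≤ Real.cosh t := by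
  rw [← Real.cosh_abs, Real.cosh_eq]
  have h1 : |t| / 2 + 1 ≤ Real.exp (|t| / 2) := Real.add_one_le_exp _
  have h2 : Real.exp (|t| / 2) * Real.exp (|t| / 2) = Real.exp |t| := by
    rw [← Real.exp_add]; ring_nf
  have h3 : (|t| / 2 + 1) * (|t| / 2 + 1) ≤ Real.exp (|t| / 2) * Real.exp (|t| / 2) :=
    mul_le_mul h1 h1 (by positivity) (Real.exp_pos _).le
  nlinarith [Real.exp_pos (-|t|), abs_nonneg t, sq_abs t]

/-- Integrability of `exp (c * t - b * t ^ 2)`. -/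
lemma integrable_exp_mul_sub_sq {b : ℝ} (hb : 0 < b) (c : ℝ) :
    Integrable (fun t : ℝ => Real.exp (c * t - b * t ^ 2)) := by
  have key : ∀ t : ℝ, c * t - b * t ^ 2 = c ^ 2 / (4 * b) + (-b * (t - c / (2 * b)) ^ 2) := by
    intro t; field_simp; ring
  simp_rw [key, Real.exp_add]
  exact ((integrable_exp_neg_mul_sq hb).comp_sub_right (c / (2 * b))).const_mul _

/-- Integrability of `exp (c*t) * exp (-a * cosh t)` over `ℝ` for `a > 0`. -/
lemma integrable_exp_mul_exp_neg_cosh {a : ℝ} (ha : 0 < a) (c : ℝ) :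
    Integrable (fun t : ℝ => Real.exp (c * t) * Real.exp (-a * Real.cosh t)) := by
  refine (integrable_exp_mul_sub_sq (b := a / 8) (by positivity) c).mono' ?_ ?_
  · exact ((Real.continuous_exp.comp (continuous_const.mul continuous_id)).mul
      (Real.continuous_exp.comp (continuous_const.mul Real.continuous_cosh))).aestronglyMeasurable
  · filter_upwards with t
    rw [Real.norm_eq_abs, abs_of_pos (by positivity), ← Real.exp_add]
    apply Real.exp_le_exp.mpr
    have := cosh_ge_sq_div_eight t
    nlinarith

/-- Gradshteyn–Ryzhik 3.471.9: for `μ > 0`, `β > 0` and real `ν`,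
`∫_0^∞ x^{ν-1} exp (-β/x - μ x) dx = 2 (β/μ)^{ν/2} K_ν(2 √(βμ))`. -/
theorem integral_rpow_exp_inv_mul (μ ν β : ℝ) (hμ : 0 < μ) (hβ : 0 < β) :
    ∫ x in Set.Ioi (0 : ℝ), x ^ (ν - 1) * Real.exp (-β / x - μ * x) =
      2 * (β / μ) ^ (ν / 2) * besselK ν (2 * Real.sqrt (β * μ)) := by
  set c : ℝ := Real.sqrt (β / μ) with hc_def
  set s : ℝ := Real.sqrt (β * μ) with hs_def
  have hc : 0 < c := Real.sqrt_pos.mpr (by positivity)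
  have hs : 0 < s := Real.sqrt_pos.mpr (by positivity)
  have hμc : μ * c = s := by
    rw [hc_def, hs_def, ← Real.sqrt_sq hμ.le, ← Real.sqrt_mul (by positivity)]
    congr 1; field_simp; ring_nf; rw [Real.sq_sqrt (by positivity)]
  have hβc : β / c = s := by
    rw [hc_def, hs_def, ← Real.sqrt_sq hβ.le, ← Real.sqrt_div (by positivity)]
    congr 1; field_simp; ring_nf; rw [Real.sq_sqrt (by positivity)]
  -- change of variables x = c * exp t
  have himg : (fun t : ℝ => c * Real.exp t) '' Set.univ = Set.Ioi (0 : ℝ) := by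
    ext x
    simp only [Set.image_univ, Set.mem_range, Set.mem_Ioi]
    constructor
    · rintro ⟨t, rfl⟩; positivity
    · intro hx; exact ⟨Real.log (x / c), by
        rw [Real.exp_log (by positivity)]; field_simp⟩
  have hCV := MeasureTheory.integral_image_eq_integral_abs_deriv_smul (f' := fun t : ℝ => c * Real.exp t)
      MeasurableSet.univ
      (fun t _ => ((Real.hasDerivAt_exp t).const_mul c).hasDerivWithinAt)
      (fun t₁ _ t₂ _ h => by
        have := mul_left_cancel₀ hc.ne' h
        exact Real.exp_injective this)
      (fun x => x ^ (ν - 1) * Real.exp (-β / x - μ * x))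
  rw [himg] at hCV
  rw [hCV, MeasureTheory.setIntegral_univ]
  have hpt : ∀ t : ℝ, |c * Real.exp t| • ((c * Real.exp t) ^ (ν - 1) *
      Real.exp (-β / (c * Real.exp t) - μ * (c * Real.exp t))) =
      c ^ ν * (Real.exp (ν * t) * Real.exp (-(2 * s) * Real.cosh t)) := by
    intro t
    have het : (0 : ℝ) < Real.exp t := Real.exp_pos t
    rw [smul_eq_mul, abs_of_pos (by positivity)]
    have h1 : (c * Real.exp t) ^ (ν - 1) = c ^ (ν - 1) * Real.exp t ^ (ν - 1) :=
      Real.mul_rpow hc.le het.le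
    have h2 : Real.exp t ^ (ν - 1) = Real.exp ((ν - 1) * t) := by
      rw [← Real.exp_one_rpow t, ← Real.rpow_mul (Real.exp_pos 1).le, Real.exp_one_rpow,
        mul_comm]
    have hβ' : β = s * c := by rw [← hβc]; field_simp
    have h3 : -β / (c * Real.exp t) - μ * (c * Real.exp t) = -(2 * s) * Real.cosh t := by
      have e1 : -β / (c * Real.exp t) = -(s * Real.exp (-t)) := by
        rw [Real.exp_neg, hβ']; field_simp
      have e2 : μ * (c * Real.exp t) = s * Real.exp t := by rw [← hμc]; ring
      rw [e1, e2, Real.cosh_eq]; ring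
    rw [h1, h2, h3]
    have h4 : c * c ^ (ν - 1) = c ^ ν := by
      nth_rewrite 1 [← Real.rpow_one c]
      rw [← Real.rpow_add hc]; ring_nf
    have h5 : Real.exp t * Real.exp ((ν - 1) * t) = Real.exp (ν * t) := by
      rw [← Real.exp_add]; ring_nf
    calc c * Real.exp t * (c ^ (ν - 1) * Real.exp ((ν - 1) * t) *
          Real.exp (-(2 * s) * Real.cosh t))
        = (c * c ^ (ν - 1)) * ((Real.exp t * Real.exp ((ν - 1) * t)) *
          Real.exp (-(2 * s) * Real.cosh t)) := by ring
      _ = c ^ ν * (Real.exp (ν * t) * Real.exp (-(2 * s) * Real.cosh t)) := by rw [h4, h5]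
  simp_rw [hpt]
  rw [MeasureTheory.integral_const_mul]
  -- now compute the full-line integral
  have h2s : (0 : ℝ) < 2 * s := by positivity
  have hint : Integrable (fun t : ℝ => Real.exp (ν * t) * Real.exp (-(2 * s) * Real.cosh t)) :=
    integrable_exp_mul_exp_neg_cosh h2s ν
  have hintneg : Integrable (fun t : ℝ => Real.exp (ν * (-t)) * Real.exp (-(2 * s) * Real.cosh (-t))) := by
    simpa [Real.cosh_neg, neg_mul, mul_neg] using integrable_exp_mul_exp_neg_cosh h2s (-ν)
  have hsplit : (∫ t : ℝ, Real.exp (ν * t) * Real.exp (-(2 * s) * Real.cosh t)) =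
      (∫ t in Set.Iic (0:ℝ), Real.exp (ν * t) * Real.exp (-(2 * s) * Real.cosh t)) +
      (∫ t in Set.Ioi (0:ℝ), Real.exp (ν * t) * Real.exp (-(2 * s) * Real.cosh t)) :=
    (intervalIntegral.integral_Iic_add_Ioi hint.integrableOn hint.integrableOn).symm
  have hrefl : (∫ t in Set.Iic (0:ℝ), Real.exp (ν * t) * Real.exp (-(2 * s) * Real.cosh t)) =
      ∫ t in Set.Ioi (0:ℝ), Real.exp (ν * (-t)) * Real.exp (-(2 * s) * Real.cosh (-t)) := by
    have := integral_comp_neg_Ioi (0 : ℝ)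
      (fun t => Real.exp (ν * t) * Real.exp (-(2 * s) * Real.cosh t))
    simp only [neg_zero] at this
    exact this.symm
  have hcomb : (∫ t in Set.Ioi (0:ℝ), Real.exp (ν * (-t)) * Real.exp (-(2 * s) * Real.cosh (-t))) +
      (∫ t in Set.Ioi (0:ℝ), Real.exp (ν * t) * Real.exp (-(2 * s) * Real.cosh t)) =
      ∫ t in Set.Ioi (0:ℝ), 2 * (Real.exp (-(2 * s) * Real.cosh t) * Real.cosh (ν * t)) := by
    rw [← MeasureTheory.integral_add hintneg.integrableOn hint.integrableOn]
    refine MeasureTheory.setIntegral_congr_fun measurableSet_Ioi fun t _ => ?_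
    simp only [Real.cosh_neg, mul_neg, Real.cosh_eq, Real.exp_neg, inv_inv]
    ring_nf
  have hbes : (∫ t in Set.Ioi (0:ℝ), 2 * (Real.exp (-(2 * s) * Real.cosh t) * Real.cosh (ν * t))) =
      2 * besselK ν (2 * s) := by
    rw [besselK, MeasureTheory.integral_const_mul]
  rw [hsplit, hrefl, hcomb, hbes]
  have hcpow : c ^ ν = (β / μ) ^ (ν / 2) := by
    rw [hc_def, Real.sqrt_eq_rpow, ← Real.rpow_mul (by positivity : (0:ℝ) ≤ β / μ)]
    congr 1; ring
  rw [hcpow]; ring
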